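/- Let p be a prime, k a field of characteristic p, and n a natural number. Let ∂ be the unique k-linear derivation of R = k[x_1,…,x_n] with ∂(x_i) = x_i^2 for all i. Let a_1,…,a_n be integers and set f = ∑_{i=1}^n a_i x_i ∈ R (coefficients taken via the canonical map ℤ → k). Then the k-linear operator D : R → R defined by D(g) = ∂(g) + f·g satisfies D^p = 0. (Thus for each linear polynomial f with prime-field coefficients, the twisted rank-one module R^f is a module over H_q = k[∂_q]/(∂_q^p).) -/

import Mathlib

open MvPolynomial Finsupp

section Aux

variable {p : ℕ} {k : Type*} [Field k] [CharP k p] {n : ℕ}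

/-- p divides the product of p consecutive integers. -/
lemma aux_dvd_prod (p : ℕ) (hp : 0 < p) (c : ℤ) :
    (p : ℤ) ∣ ∏ t ∈ Finset.range p, (c + t) := by
  have hp0 : (p : ℤ) ≠ 0 := Int.natCast_ne_zero.mpr hp.ne'
  set t0 : ℕ := ((-c) % p).toNat with ht0
  have hnn : (0 : ℤ) ≤ (-c) % p := Int.emod_nonneg _ hp0
  have hcast : (t0 : ℤ) = (-c) % p := Int.toNat_of_nonneg hnn
  have hlt : t0 < p := by
    have := Int.emod_lt_of_pos (-c) (show (0:ℤ) < p by exact_mod_cast hp)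
    omega
  have hdvd : (p : ℤ) ∣ c + t0 := by
    refine ⟨-((-c) / p), ?_⟩
    rw [hcast, Int.emod_def]; ring
  exact hdvd.trans (Finset.dvd_prod_of_mem _ (Finset.mem_range.mpr hlt))

variable (k n) in
/-- The individual one-variable twisted operators. -/
noncomputable def Eop (a : Fin n → ℤ) (i : Fin n) :
    Module.End k (MvPolynomial (Fin n) k) :=
  (((X i ^ 2 : MvPolynomial (Fin n) k) • pderiv i :
      Derivation k (MvPolynomial (Fin n) k) (MvPolynomial (Fin n) k)) :
    MvPolynomial (Fin n) k →ₗ[k] MvPolynomial (Fin n) k)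
  + LinearMap.mulLeft k (a i • X i)

lemma Eop_monomial (a : Fin n → ℤ) (i : Fin n) (s : Fin n →₀ ℕ) (c : k) :
    Eop k n a i (monomial s c)
      = ((s i : ℤ) + a i) • monomial (s + Finsupp.single i 1) c := by
  have hX : (X i : MvPolynomial (Fin n) k) = monomial (Finsupp.single i 1) 1 := rfl
  have hX2 : (X i ^ 2 : MvPolynomial (Fin n) k) = monomial (Finsupp.single i 2) 1 := by
    rw [hX, sq, monomial_mul, one_mul, ← Finsupp.single_add]
  have h1 : ((X i ^ 2 : MvPolynomial (Fin n) k) • pderiv i :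
        Derivation k (MvPolynomial (Fin n) k) (MvPolynomial (Fin n) k)) (monomial s c)
      = (s i : ℤ) • monomial (s + Finsupp.single i 1) c := by
    rw [Derivation.smul_apply, pderiv_monomial, smul_eq_mul, hX2, monomial_mul, one_mul]
    rcases Nat.eq_zero_or_pos (s i) with h0 | hpos
    · rw [h0]; simp
    · have hexp : Finsupp.single i 2 + (s - Finsupp.single i 1) = s + Finsupp.single i 1 := by
        ext j
        rcases eq_or_ne j i with rfl | hne
        · simp only [Finsupp.add_apply, Finsupp.tsub_apply, Finsupp.single_eq_same]
          omega
        · simp [Finsupp.single_eq_of_ne hne, Finsupp.tsub_apply]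
      rw [hexp]
      rw [show ((s i : ℤ)) • monomial (s + Finsupp.single i 1) c
          = ((s i : ℕ)) • monomial (s + Finsupp.single i 1) c from natCast_zsmul _ _,
        ← map_nsmul, nsmul_eq_mul, mul_comm]
  have h2 : ((a i • X i : MvPolynomial (Fin n) k)) * monomial s c
      = a i • monomial (s + Finsupp.single i 1) c := by
    rw [smul_mul_assoc, hX, monomial_mul, one_mul, add_comm]
  simp only [Eop, LinearMap.add_apply, Derivation.coeFn_coe, LinearMap.mulLeft_apply]
  rw [h1, h2, ← add_smul]

lemma Eop_pow_monomial (a : Fin n → ℤ) (i : Fin n) (m : ℕ) (s : Fin n →₀ ℕ) (c : k) :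
    (Eop k n a i ^ m) (monomial s c)
      = (∏ t ∈ Finset.range m, ((s i : ℤ) + a i + t))
          • monomial (s + Finsupp.single i m) c := by
  induction m generalizing s with
  | zero => simp
  | succ m ih =>
    rw [pow_succ, Module.End.mul_apply, Eop_monomial, map_zsmul, ih]
    rw [smul_smul]
    congr 1
    · rw [Finset.prod_range_succ']
      have : ∀ t : ℕ, (((s + Finsupp.single i 1 : Fin n →₀ ℕ) i : ℤ)) + a i + t
          = (s i : ℤ) + a i + (t + 1) := by
        intro t
        simp only [Finsupp.add_apply, Finsupp.single_eq_same]
        push_cast; ring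
      rw [Finset.prod_congr rfl fun t _ => this t]
      push_cast
      ring
    · congr 1
      rw [add_assoc, ← Finsupp.single_add, Nat.add_comm 1 m]

lemma Eop_pow_p (hp : p.Prime) (a : Fin n → ℤ) (i : Fin n) : Eop k n a i ^ p = 0 := by
  apply MvPolynomial.linearMap_ext
  intro s
  apply LinearMap.ext
  intro c
  simp only [LinearMap.comp_apply, LinearMap.zero_comp, LinearMap.zero_apply]
  rw [Eop_pow_monomial]
  obtain ⟨m, hm⟩ := aux_dvd_prod p hp.pos ((s i : ℤ) + a i)
  rw [hm, mul_smul]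
  rw [← Int.cast_smul_eq_zsmul k (p : ℤ)]
  simp [CharP.cast_eq_zero k p]

lemma Eop_commute (a : Fin n → ℤ) (i j : Fin n) :
    Commute (Eop k n a i) (Eop k n a j) := by
  rcases eq_or_ne i j with rfl | hne
  · exact Commute.refl _
  · apply MvPolynomial.linearMap_ext
    intro s
    apply LinearMap.ext
    intro c
    have hji : ((s + Finsupp.single j 1 : Fin n →₀ ℕ)) i = s i := by
      simp [Finsupp.single_eq_of_ne hne]
    have hij : ((s + Finsupp.single i 1 : Fin n →₀ ℕ)) j = s j := by
      simp [Finsupp.single_eq_of_ne (Ne.symm hne)]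
    simp only [LinearMap.comp_apply, Module.End.mul_apply, Eop_monomial, map_zsmul]
    rw [hji, hij, smul_smul, smul_smul,
      mul_comm ((s j : ℤ) + a j) ((s i : ℤ) + a i),
      add_right_comm s (Finsupp.single j 1) (Finsupp.single i 1)]

end Aux

/-- for the derivation `∂` of `R = k[x_1,…,x_n]` with `∂(x_i) = x_i²` over a
field of characteristic `p`, and `f = ∑ a_i x_i` with integer coefficients, the twisted
operator `D(g) = ∂(g) + f·g` satisfies `D^p = 0`. -/
theorem stmt_6 (p : ℕ) (hp : p.Prime) (k : Type*) [Field k] [CharP k p] (n : ℕ)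
    (D : Derivation k (MvPolynomial (Fin n) k) (MvPolynomial (Fin n) k))
    (hD : ∀ i, D (MvPolynomial.X i) = MvPolynomial.X i ^ 2)
    (a : Fin n → ℤ) :
    ((D.toLinearMap
        + LinearMap.mulLeft k (Finset.univ.sum fun i => a i • MvPolynomial.X i) :
      Module.End k (MvPolynomial (Fin n) k)) ^ p) = 0 := by
  haveI : Fact p.Prime := ⟨hp⟩
  set R := MvPolynomial (Fin n) k
  -- the big operator is the sum of the Eop's
  have hsplit : (D.toLinearMap
        + LinearMap.mulLeft k (Finset.univ.sum fun i => a i • MvPolynomial.X i) :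
      Module.End k R) = ∑ i, Eop k n a i := by
    have hDeq : D = ∑ i, ((X i ^ 2 : R) • pderiv i :
        Derivation k R R) := by
      apply MvPolynomial.derivation_ext
      intro j
      rw [hD j]
      have := congrFun (map_sum (Derivation.coeFnAddMonoidHom (M := R))
        (fun i => ((X i ^ 2 : R) • pderiv i : Derivation k R R)) Finset.univ) (X j)
      simp only [Derivation.coeFnAddMonoidHom] at this
      rw [show ((∑ i, ((X i ^ 2 : R) • pderiv i : Derivation k R R)) (X j))
          = ∑ i, ((X i ^ 2 : R) • pderiv i : Derivation k R R) (X j) from by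
        exact this.trans (by simp [Finset.sum_apply])]
      rw [Finset.sum_eq_single j
        (fun b _ hb => by simp [Derivation.smul_apply, pderiv_X_of_ne (Ne.symm hb)])
        (by simp)]
      simp only [Derivation.smul_apply, smul_eq_mul, sq]
      rw [pderiv_X_self, mul_one]
    apply LinearMap.ext
    intro g
    simp only [LinearMap.add_apply, LinearMap.mulLeft_apply, LinearMap.sum_apply, Eop,
      Derivation.coeFn_coe]
    rw [Finset.sum_add_distrib]
    congr 1
    · rw [hDeq]
      have := congrFun (map_sum (Derivation.coeFnAddMonoidHom (M := R))
        (fun i => ((X i ^ 2 : R) • pderiv i : Derivation k R R)) Finset.univ) g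
      simp only [Derivation.coeFnAddMonoidHom] at this
      exact this.trans (by simp [Finset.sum_apply])
    · rw [Finset.sum_mul]
  rw [hsplit]
  haveI : Nontrivial (Module.End k R) :=
    ⟨1, 0, fun h => one_ne_zero (α := R) (by simpa using LinearMap.ext_iff.mp h 1)⟩
  haveI : CharP (Module.End k R) p :=
    charP_of_injective_algebraMap (algebraMap k (Module.End k R)).injective p
  -- sum of commuting nilpotents
  have key : ∀ s : Finset (Fin n), (∑ i ∈ s, Eop k n a i) ^ p = ∑ i ∈ s, Eop k n a i ^ p := by
    intro s
    induction s using Finset.induction with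
    | empty => simp [zero_pow hp.ne_zero]
    | @insert x s' hx ih =>
      rw [Finset.sum_insert hx, Finset.sum_insert hx,
        add_pow_char_of_commute _ (Commute.sum_right s' (fun i => Eop k n a i) (Eop k n a x)
          (fun j _ => Eop_commute a x j)), ih]
  rw [key]
  simp [Eop_pow_p hp a]
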